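/- Let α, β ∈ (0,1), a1, a2 > 0 with a1 + a2 = 1, p1, p2 ∈ (0,1]. Suppose nonnegative reals P(x1,x2), (x1,x2) ∈ {0,1,2}², satisfy the nine balance equations of the two-type two-cell system with β1 = β2 = β (as in Theorem 2) and normalization. Then P(0,1)/P(0,2) = a1/a2, i.e., a2·P(0,1) = a1·P(0,2), and likewise a2·P(1,1) = a1·P(1,2), a2·P(2,1) = a1·P(2,2). -/
import Mathlib

theorem type_distribution_in_cells (α β p1 p2 a1 a2 : ℝ)
    (hα : α ∈ Set.Ioo (0:ℝ) 1) (hβ : β ∈ Set.Ioo (0:ℝ) 1)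
    (ha1 : 0 < a1) (ha2 : 0 < a2) (hsum : a1 + a2 = 1)
    (hp1 : p1 ∈ Set.Ioc (0:ℝ) 1) (hp2 : p2 ∈ Set.Ioc (0:ℝ) 1)
    (P00 P01 P02 P10 P20 P11 P12 P21 P22 : ℝ)
    (h00 : 0 ≤ P00) (h01 : 0 ≤ P01) (h02 : 0 ≤ P02) (h10 : 0 ≤ P10) (h20 : 0 ≤ P20)
    (h11 : 0 ≤ P11) (h12 : 0 ≤ P12) (h21 : 0 ≤ P21) (h22 : 0 ≤ P22)
    (e17 : α * P00 = (1 - α) * β * (P01 + P02))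
    (e18 : (1 - (1 - α) * (1 - β)) * P01 = p1 * P10)
    (e19 : (1 - (1 - α) * (1 - β)) * P02 = p2 * P20)
    (e20 : p1 * P10 = α * a1 * (P00 + β * (P01 + P02)) + β * (P11 + P12))
    (e21 : β * P11 = α * a1 * (1 - β) * P01)
    (e22 : β * P12 = α * a1 * (1 - β) * P02)
    (e23 : p2 * P20 = α * a2 * (P00 + β * (P01 + P02)) + β * (P21 + P22))
    (e24 : β * P21 = α * a2 * (1 - β) * P01)
    (e25 : β * P22 = α * a2 * (1 - β) * P02)
    (e26 : P00 + P01 + P02 + P10 + P20 + P11 + P12 + P21 + P22 = 1) :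
    a2 * P01 = a1 * P02 ∧ a2 * P11 = a1 * P12 ∧ a2 * P21 = a1 * P22 := by
  obtain ⟨hα0, hα1⟩ := hα
  obtain ⟨hβ0, hβ1⟩ := hβ
  have hc : (0:ℝ) < α + β - α * β := by nlinarith
  have h1 : (α + β - α * β) * P01 = α * a1 * (P00 + P01 + P02) := by
    linear_combination e18 + e20 + e21 + e22
  have h2 : (α + β - α * β) * P02 = α * a2 * (P00 + P01 + P02) := by
    linear_combination e19 + e23 + e24 + e25
  have key : (α + β - α * β) * (a2 * P01) = (α + β - α * β) * (a1 * P02) := by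
    linear_combination a2 * h1 - a1 * h2
  have g1 : a2 * P01 = a1 * P02 := mul_left_cancel₀ hc.ne' key
  refine ⟨g1, ?_, ?_⟩
  · have : β * (a2 * P11) = β * (a1 * P12) := by
      linear_combination a2 * e21 - a1 * e22 + α * a1 * (1 - β) * g1
    exact mul_left_cancel₀ hβ0.ne' this
  · have : β * (a2 * P21) = β * (a1 * P22) := by
      linear_combination a2 * e24 - a1 * e25 + α * a2 * (1 - β) * g1
    exact mul_left_cancel₀ hβ0.ne' this
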